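/- arXiv:1910.01444 — 4 statements merged into one kernel-verified Lean document; each statement's English description precedes it below -/
import Mathlib

section
/- Let D be a finite nonempty index set, let (Ω, 𝓕, ℙ) be a probability space, and for each d ∈ D let O_d : Ω → {0, 1} be a random variable with ℙ(O_d = 1) = P_d ∈ (0, 1]. Let e : D → ℝ satisfy 0 ≤ e(d) ≤ Δ for all d ∈ D, where Δ > 0, and let P̂_d ∈ (0, 1] be arbitrary estimated propensities. Define the IPS estimator with estimated propensities L̂_IPS = (1/|D|) · Σ_{d ∈ D} O_d · e(d) / P̂_d and the ideal loss L_ideal = (1/|D|) · Σ_{d ∈ D} e(d). Then the absolute bias satisfies |L_ideal − E[L̂_IPS]| ≤ (Δ/|D|) · Σ_{d ∈ D} |1 − P_d / P̂_d|. -/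
open MeasureTheory ProbabilityTheory

/-- Bias bound for the IPS estimator with estimated propensities `P̂ d ∈ (0,1]`:
if the per-pair losses satisfy `0 ≤ e d ≤ Δ` and the true observation probabilities are
`P d ∈ (0,1]`, then the absolute bias of
`L̂_IPS = (1/|D|) · ∑ d, O d · e d / P̂ d` with respect to the ideal loss
`(1/|D|) · ∑ d, e d` is at most `(Δ/|D|) · ∑ d, |1 - P d / P̂ d|`. -/
theorem ips_estimator_bias_bound {D : Type*} [Fintype D] [Nonempty D]
    {Ω : Type*} [MeasureSpace Ω] [IsProbabilityMeasure (ℙ : Measure Ω)]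
    (O : D → Ω → ℝ)
    (hO01 : ∀ d ω, O d ω = 0 ∨ O d ω = 1)
    (hOmeas : ∀ d, Measurable (O d))
    (P : D → ℝ) (hP : ∀ d, P d ∈ Set.Ioc (0 : ℝ) 1)
    (hprob : ∀ d, (ℙ : Measure Ω) {ω | O d ω = 1} = ENNReal.ofReal (P d))
    (Phat : D → ℝ) (hPhat : ∀ d, Phat d ∈ Set.Ioc (0 : ℝ) 1)
    (Δ : ℝ) (hΔ : 0 < Δ)
    (e : D → ℝ) (he : ∀ d, e d ∈ Set.Icc (0 : ℝ) Δ) :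
    |(1 / (Fintype.card D : ℝ)) * ∑ d, e d -
        ∫ ω, (1 / (Fintype.card D : ℝ)) * ∑ d, O d ω * e d / Phat d ∂(ℙ : Measure Ω)| ≤
      (Δ / (Fintype.card D : ℝ)) * ∑ d, |1 - P d / Phat d| := by
  have hcard : (0 : ℝ) < (Fintype.card D : ℝ) := by
    exact_mod_cast Fintype.card_pos
  -- O d as an indicator
  have hind : ∀ d, O d = Set.indicator {ω | O d ω = 1} (fun _ => (1 : ℝ)) := by
    intro d
    funext ω
    rcases hO01 d ω with h0 | h1
    · rw [Set.indicator_of_notMem]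
      · exact h0
      · simp [Set.mem_setOf_eq, h0]
    · rw [Set.indicator_of_mem]
      · exact h1
      · exact h1

  have hmeasS : ∀ d, MeasurableSet {ω | O d ω = 1} :=
    fun d => (hOmeas d) (measurableSet_singleton 1)
  have hintO : ∀ d, ∫ ω, O d ω ∂(ℙ : Measure Ω) = P d := by
    intro d
    rw [hind d]
    rw [MeasureTheory.integral_indicator_const (1 : ℝ) (hmeasS d)]
    rw [measureReal_def, hprob d]
    rw [ENNReal.toReal_ofReal (hP d).1.le]
    simp
  have hIntO : ∀ d, Integrable (O d) (ℙ : Measure Ω) := by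
    intro d
    rw [hind d]
    exact (integrable_const (1 : ℝ)).indicator (hmeasS d)
  -- compute the integral
  have hterm : ∀ d, ∫ ω, O d ω * e d / Phat d ∂(ℙ : Measure Ω) = P d * e d / Phat d := by
    intro d
    have : (fun ω => O d ω * e d / Phat d) = fun ω => (e d / Phat d) * O d ω := by
      funext ω; ring
    rw [this, integral_const_mul, hintO d]
    ring
  have hIntTerm : ∀ d, Integrable (fun ω => O d ω * e d / Phat d) (ℙ : Measure Ω) := by
    intro d
    have : (fun ω => O d ω * e d / Phat d) = fun ω => (e d / Phat d) * O d ω := by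
      funext ω; ring
    rw [this]
    exact (hIntO d).const_mul _
  have hintegral : ∫ ω, (1 / (Fintype.card D : ℝ)) * ∑ d, O d ω * e d / Phat d ∂(ℙ : Measure Ω)
      = (1 / (Fintype.card D : ℝ)) * ∑ d, P d * e d / Phat d := by
    rw [integral_const_mul, integral_finset_sum _ (fun d _ => hIntTerm d)]
    congr 1
    exact Finset.sum_congr rfl (fun d _ => hterm d)
  rw [hintegral]
  rw [← mul_sub, ← Finset.sum_sub_distrib]
  rw [abs_mul]
  have hsum : |∑ d, (e d - P d * e d / Phat d)| ≤ Δ * ∑ d, |1 - P d / Phat d| := by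
    calc |∑ d, (e d - P d * e d / Phat d)| ≤ ∑ d, |e d - P d * e d / Phat d| :=
          Finset.abs_sum_le_sum_abs _ _
      _ ≤ ∑ d, Δ * |1 - P d / Phat d| := by
          apply Finset.sum_le_sum
          intro d _
          have : e d - P d * e d / Phat d = e d * (1 - P d / Phat d) := by
            ring
          rw [this, abs_mul]
          apply mul_le_mul_of_nonneg_right _ (abs_nonneg _)
          rw [abs_of_nonneg (he d).1]
          exact (he d).2
      _ = Δ * ∑ d, |1 - P d / Phat d| := by rw [Finset.mul_sum]
  calc |1 / (Fintype.card D : ℝ)| * |∑ d, (e d - P d * e d / Phat d)|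
      ≤ |1 / (Fintype.card D : ℝ)| * (Δ * ∑ d, |1 - P d / Phat d|) :=
        mul_le_mul_of_nonneg_left hsum (abs_nonneg _)
    _ = (Δ / (Fintype.card D : ℝ)) * ∑ d, |1 - P d / Phat d| := by
        rw [abs_of_pos (by positivity)]
        ring
end

section
/- Theorem 5.2 of Schnabel et al., as stated in the paper (uniform form over the hypothesis space, which in particular applies to the empirical risk minimizer): Let D be a finite nonempty index set, and for each d ∈ D let O_d : Ω → {0, 1} be independent random variables with ℙ(O_d = 1) = P_d ∈ (0, 1]. Let P̂_d ∈ (0, 1] be estimated propensities, let H = {R̂₁, …, R̂_{|H|}} be a finite nonempty set of functions D → ℝ, let ℓ : ℝ × ℝ → ℝ satisfy 0 ≤ ℓ(x, y) ≤ Δ for a constant Δ > 0, and let R : D → ℝ be the true ratings. Define L_ideal(R̂) = (1/|D|) · Σ_{d ∈ D} ℓ(R(d), R̂(d)) and L̂_IPS(R̂) = (1/|D|) · Σ_{d ∈ D} O_d · ℓ(R(d), R̂(d)) / P̂_d. Then for any δ ∈ (0, 1), with probability at least 1 − δ, simultaneously for every R̂ ∈ H (hence for any R̂_ERM ∈ H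 minimizing L̂_IPS over H): L_ideal(R̂) ≤ L̂_IPS(R̂) + (Δ/|D|) · Σ_{d ∈ D} |1 − P_d / P̂_d| + (Δ/|D|) · √((1/2) · log(2|H|/δ)) · √(Σ_{d ∈ D} 1/P̂_d²). -/
open MeasureTheory ProbabilityTheory

open Real in
lemma two_point_hoeffding {p : ℝ} (hp0 : 0 ≤ p) (hp1 : p ≤ 1) (u : ℝ) :
    (1 - p) + p * Real.exp u ≤ Real.exp (p * u + u ^ 2 / 8) := by
  set den : ℝ → ℝ := fun v => 1 - p + p * Real.exp v with hden_def
  have hden : ∀ v, 0 < den v := by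
    intro v
    have he := Real.exp_pos v
    simp only [hden_def]
    nlinarith [mul_nonneg hp0 he.le, mul_nonneg (sub_nonneg.2 hp1) (sub_nonneg.2 he.le)]
  have hdenD : ∀ v, HasDerivAt den (p * Real.exp v) v := by
    intro v
    exact ((Real.hasDerivAt_exp v).const_mul p).const_add (1 - p)
  set g : ℝ → ℝ := fun v => p + v / 4 - p * Real.exp v / den v with hg_def
  set f : ℝ → ℝ := fun v => p * v + v ^ 2 / 8 - Real.log (den v) with hf_def
  have hfD : ∀ v, HasDerivAt f (g v) v := by
    intro v
    have h1 : HasDerivAt (fun v : ℝ => p * v + v ^ 2 / 8) (p + v / 4) v := by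
      have := ((hasDerivAt_pow 2 v).div_const 8).const_add 0
      have h2 := (hasDerivAt_id v).const_mul p
      exact (h2.add ((hasDerivAt_pow 2 v).div_const 8)).congr_deriv (by norm_num; ring)
    have h3 : HasDerivAt (fun v => Real.log (den v)) (p * Real.exp v / den v) v :=
      (hdenD v).log (hden v).ne'
    exact h1.sub h3
  have hgD : ∀ v, HasDerivAt g (1 / 4 - p * Real.exp v * (1 - p) / (den v) ^ 2) v := by
    intro v
    have h1 : HasDerivAt (fun v : ℝ => p + v / 4) (1 / 4) v := by
      simpa using ((hasDerivAt_id v).div_const 4).const_add p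
    have h2 : HasDerivAt (fun v => p * Real.exp v / den v)
        ((p * Real.exp v * den v - p * Real.exp v * (p * Real.exp v)) / (den v) ^ 2) v :=
      ((Real.hasDerivAt_exp v).const_mul p).div (hdenD v) (hden v).ne'
    have := h1.sub h2
    refine this.congr_deriv ?_
    have : den v = 1 - p + p * Real.exp v := rfl
    rw [this]
    ring
  have hg'nonneg : ∀ v, 0 ≤ 1 / 4 - p * Real.exp v * (1 - p) / (den v) ^ 2 := by
    intro v
    have h2 : (0:ℝ) < (den v) ^ 2 := pow_pos (hden v) 2
    rw [sub_nonneg, div_le_iff₀ h2]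
    have : den v = 1 - p + p * Real.exp v := rfl
    nlinarith [sq_nonneg ((1 - p) - p * Real.exp v)]
  have hgmono : Monotone g := by
    refine monotone_of_deriv_nonneg (fun v => (hgD v).differentiableAt) fun v => ?_
    rw [(hgD v).deriv]; exact hg'nonneg v
  have hg0 : g 0 = 0 := by
    simp only [hg_def, hden_def, Real.exp_zero, mul_one]
    field_simp
    ring
  have hf0 : f 0 = 0 := by
    simp [hf_def, hden_def, Real.exp_zero]
  have hfdiff : Differentiable ℝ f := fun v => (hfD v).differentiableAt
  have hfnonneg : 0 ≤ f u := by
    rcases le_total 0 u with hu | hu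
    · have hmono : MonotoneOn f (Set.Ici 0) := by
        refine monotoneOn_of_deriv_nonneg (convex_Ici 0) hfdiff.continuous.continuousOn
          hfdiff.differentiableOn fun x hx => ?_
        rw [(hfD x).deriv, ← hg0]
        exact hgmono (le_of_lt (by simpa using hx))
      have := hmono (Set.self_mem_Ici) (Set.mem_Ici.2 hu) hu
      linarith [hf0 ▸ this]
    · have hanti : AntitoneOn f (Set.Iic 0) := by
        refine antitoneOn_of_deriv_nonpos (convex_Iic 0) hfdiff.continuous.continuousOn
          hfdiff.differentiableOn fun x hx => ?_
        rw [(hfD x).deriv, ← hg0]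
        exact hgmono (le_of_lt (by simpa using hx))
      have := hanti (Set.mem_Iic.2 hu) Set.self_mem_Iic hu
      linarith [hf0 ▸ this]
  have hlog : Real.log (den u) ≤ p * u + u ^ 2 / 8 := by
    have : f u = p * u + u ^ 2 / 8 - Real.log (den u) := rfl
    linarith [this ▸ hfnonneg]
  have := (Real.log_le_iff_le_exp (hden u)).1 hlog
  simpa [hden_def] using this


lemma bernoulli_chernoff {D : Type*} [Fintype D]
    {Ω : Type*} [MeasureSpace Ω] [IsProbabilityMeasure (ℙ : Measure Ω)]
    (O : D → Ω → ℝ)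
    (hO01 : ∀ d ω, O d ω = 0 ∨ O d ω = 1)
    (hOmeas : ∀ d, Measurable (O d))
    (hOindep : iIndepFun O ℙ)
    (P : D → ℝ) (hP0 : ∀ d, 0 ≤ P d) (hP1 : ∀ d, P d ≤ 1)
    (hprob : ∀ d, (ℙ : Measure Ω) {ω | O d ω = 1} = ENNReal.ofReal (P d))
    (c : D → ℝ)
    (s B : ℝ) (hs : 0 ≤ s) (hB0 : 0 < B) (hcB : ∑ d, c d ^ 2 ≤ B) :
    ((ℙ : Measure Ω) {ω | s ≤ ∑ d, P d * c d - ∑ d, O d ω * c d}).toReal ≤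
      Real.exp (-2 * s ^ 2 / B) := by
  set t : ℝ := 4 * s / B with ht_def
  have ht : 0 ≤ t := by positivity
  set X : D → Ω → ℝ := fun d ω => (P d - O d ω) * c d with hX_def
  have hXmeas : ∀ d, Measurable (X d) := fun d =>
    (measurable_const.sub (hOmeas d)).mul_const _
  have hXindep : iIndepFun X ℙ := by
    have := hOindep.comp (fun d (x : ℝ) => (P d - x) * c d)
      (fun d => (measurable_const.sub measurable_id).mul_const _)
    exact this
  -- O d is the indicator of {O d = 1}
  have hOind : ∀ d, O d = Set.indicator {ω | O d ω = 1} (fun _ => (1:ℝ)) := by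
    intro d
    funext ω
    rcases hO01 d ω with h | h <;>
      simp [Set.indicator_apply, Set.mem_setOf_eq, h]
  have hAmeas : ∀ d, MeasurableSet {ω | O d ω = 1} := fun d =>
    hOmeas d (measurableSet_singleton 1)
  have hOint : ∀ d, Integrable (O d) ℙ := by
    intro d
    rw [hOind d]
    exact (integrable_const (1:ℝ)).indicator (hAmeas d)
  have hOcalc : ∀ d, ∫ ω, O d ω ∂(ℙ : Measure Ω) = P d := by
    intro d
    have : (fun ω => O d ω) = O d := rfl
    rw [this, hOind d, integral_indicator_const (1:ℝ) (hAmeas d), measureReal_def, hprob d,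
      smul_eq_mul, mul_one, ENNReal.toReal_ofReal (hP0 d)]
  -- pointwise affine form of exp (t * X d)
  have haffine : ∀ d, (fun ω => Real.exp (t * X d ω)) =
      fun ω => Real.exp (t * (P d * c d)) +
        (Real.exp (t * ((P d - 1) * c d)) - Real.exp (t * (P d * c d))) * O d ω := by
    intro d
    funext ω
    rcases hO01 d ω with h | h <;> simp [hX_def, h] <;> ring_nf
  have hexpint : ∀ d, Integrable (fun ω => Real.exp (t * X d ω)) ℙ := by
    intro d
    rw [haffine d]
    exact (integrable_const _).add ((hOint d).const_mul _)
  have hmgf : ∀ d, mgf (X d) ℙ t ≤ Real.exp (t ^ 2 * c d ^ 2 / 8) := by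
    intro d
    have hcomp : mgf (X d) ℙ t = Real.exp (t * (P d * c d)) +
        (Real.exp (t * ((P d - 1) * c d)) - Real.exp (t * (P d * c d))) * P d := by
      rw [mgf, haffine d, integral_add (integrable_const _) ((hOint d).const_mul _),
        integral_const, integral_const_mul, hOcalc d]
      simp
    have key := two_point_hoeffding (hP0 d) (hP1 d) (-(t * c d))
    have hpos := Real.exp_pos (t * (P d * c d))
    have h1 : Real.exp (t * ((P d - 1) * c d)) =
        Real.exp (t * (P d * c d)) * Real.exp (-(t * c d)) := by
      rw [← Real.exp_add]; ring_nf
    rw [hcomp]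
    calc Real.exp (t * (P d * c d)) +
          (Real.exp (t * ((P d - 1) * c d)) - Real.exp (t * (P d * c d))) * P d
        = Real.exp (t * (P d * c d)) * ((1 - P d) + P d * Real.exp (-(t * c d))) := by
          rw [h1]; ring
      _ ≤ Real.exp (t * (P d * c d)) *
            Real.exp (P d * -(t * c d) + (-(t * c d)) ^ 2 / 8) :=
          mul_le_mul_of_nonneg_left key hpos.le
      _ = Real.exp (t ^ 2 * c d ^ 2 / 8) := by
          rw [← Real.exp_add]; congr 1; ring
  have hint_sum : Integrable (fun ω => Real.exp (t * (∑ d, X d) ω)) ℙ :=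
    hXindep.integrable_exp_mul_sum hXmeas (fun d _ => hexpint d)
  have hset : {ω | s ≤ ∑ d, P d * c d - ∑ d, O d ω * c d} =
      {ω | s ≤ (∑ d, X d) ω} := by
    ext ω
    simp only [Set.mem_setOf_eq, Finset.sum_apply, hX_def]
    rw [← Finset.sum_sub_distrib]
    simp_rw [sub_mul]
  have hchern := measure_ge_le_exp_mul_mgf (X := ∑ d, X d) (μ := ℙ) s ht hint_sum
  rw [hset]
  refine hchern.trans ?_
  have hmgfsum : mgf (∑ d, X d) ℙ t ≤ Real.exp (t ^ 2 * B / 8) := by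
    rw [hXindep.mgf_sum hXmeas]
    calc ∏ d, mgf (X d) ℙ t ≤ ∏ d, Real.exp (t ^ 2 * c d ^ 2 / 8) :=
          Finset.prod_le_prod (fun d _ => mgf_nonneg) (fun d _ => hmgf d)
      _ = Real.exp (∑ d, t ^ 2 * c d ^ 2 / 8) := by rw [Real.exp_sum]
      _ ≤ Real.exp (t ^ 2 * B / 8) := by
          apply Real.exp_le_exp.2
          rw [← Finset.sum_div, ← Finset.mul_sum]
          have : t ^ 2 * (∑ d, c d ^ 2) ≤ t ^ 2 * B :=
            mul_le_mul_of_nonneg_left hcB (sq_nonneg t)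
          linarith
  calc Real.exp (-t * s) * mgf (∑ d, X d) ℙ t
      ≤ Real.exp (-t * s) * Real.exp (t ^ 2 * B / 8) :=
        mul_le_mul_of_nonneg_left hmgfsum (Real.exp_pos _).le
    _ = Real.exp (-t * s + t ^ 2 * B / 8) := (Real.exp_add _ _).symm
    _ = Real.exp (-2 * s ^ 2 / B) := by
        congr 1
        rw [ht_def]
        field_simp
        ring

set_option maxHeartbeats 1000000 in
/-- Theorem 5.2 of Schnabel et al. (generalization error bound for IPS with estimated
propensities), in its uniform form over a finite hypothesis space `H` (hence applying in
particular to the empirical risk minimizer): with probability at least `1 - δ`,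
simultaneously for every `R̂ ∈ H`,
`L_ideal(R̂) ≤ L̂_IPS(R̂) + (Δ/|D|)·∑ d, |1 - P d / P̂ d|
  + (Δ/|D|)·√((1/2)·log(2|H|/δ))·√(∑ d, 1 / P̂ d ^ 2)`. -/
theorem ips_generalization_error_bound {D : Type*} [Fintype D] [Nonempty D]
    {Ω : Type*} [MeasureSpace Ω] [IsProbabilityMeasure (ℙ : Measure Ω)]
    (O : D → Ω → ℝ)
    (hO01 : ∀ d ω, O d ω = 0 ∨ O d ω = 1)
    (hOmeas : ∀ d, Measurable (O d))
    (hOindep : iIndepFun O ℙ)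
    (P : D → ℝ) (hP : ∀ d, P d ∈ Set.Ioc (0 : ℝ) 1)
    (hprob : ∀ d, (ℙ : Measure Ω) {ω | O d ω = 1} = ENNReal.ofReal (P d))
    (Phat : D → ℝ) (hPhat : ∀ d, Phat d ∈ Set.Ioc (0 : ℝ) 1)
    (Δ : ℝ) (hΔ : 0 < Δ)
    (ℓ : ℝ → ℝ → ℝ) (hℓ : ∀ x y, ℓ x y ∈ Set.Icc (0 : ℝ) Δ)
    (R : D → ℝ)
    (H : Finset (D → ℝ)) (hH : H.Nonempty)
    (δ : ℝ) (hδ : δ ∈ Set.Ioo (0 : ℝ) 1) :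
    ENNReal.ofReal (1 - δ) ≤
      (ℙ : Measure Ω) {ω | ∀ Rhat ∈ H,
        (1 / (Fintype.card D : ℝ)) * ∑ d, ℓ (R d) (Rhat d) ≤
          (1 / (Fintype.card D : ℝ)) * ∑ d, O d ω * ℓ (R d) (Rhat d) / Phat d
          + (Δ / (Fintype.card D : ℝ)) * ∑ d, |1 - P d / Phat d|
          + (Δ / (Fintype.card D : ℝ)) *
              Real.sqrt ((1 / 2) * Real.log (2 * (H.card : ℝ) / δ)) *
              Real.sqrt (∑ d, 1 / Phat d ^ 2)} := by
  classical
  obtain ⟨hδ0, hδ1⟩ := hδ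
  obtain ⟨n, hn_def⟩ : ∃ n : ℝ, n = (Fintype.card D : ℝ) := ⟨_, rfl⟩
  have hn0 : 0 < n := by
    rw [hn_def]
    exact_mod_cast Fintype.card_pos (α := D)
  obtain ⟨T, hT_def⟩ : ∃ T : ℝ, T = ∑ d, 1 / Phat d ^ 2 := ⟨_, rfl⟩
  rw [← hn_def, ← hT_def]
  have hT1 : (n : ℝ) ≤ T := by
    have h1 : (n : ℝ) = ∑ _d : D, (1:ℝ) := by simp [hn_def]
    rw [hT_def, h1]
    apply Finset.sum_le_sum
    intro d _
    have hp1 := (hPhat d).1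
    have hp2 := (hPhat d).2
    rw [le_div_iff₀ (by positivity)]
    nlinarith
  have hT0 : 0 < T := lt_of_lt_of_le hn0 hT1
  obtain ⟨L, hL_def⟩ : ∃ L : ℝ, L = Real.log (2 * (H.card : ℝ) / δ) := ⟨_, rfl⟩
  rw [← hL_def]
  have hHcard : (1:ℝ) ≤ (H.card : ℝ) := by
    exact_mod_cast Finset.card_pos.2 hH
  have hL0 : 0 < L := by
    rw [hL_def]
    apply Real.log_pos
    rw [lt_div_iff₀ hδ0]
    nlinarith
  obtain ⟨s, hs_def⟩ : ∃ s : ℝ, s = Δ * Real.sqrt ((1/2) * L) * Real.sqrt T := ⟨_, rfl⟩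
  have hs0 : 0 ≤ s := by
    rw [hs_def]; positivity
  obtain ⟨B, hB_def⟩ : ∃ B : ℝ, B = Δ ^ 2 * T := ⟨_, rfl⟩
  have hB0 : 0 < B := by
    rw [hB_def]; exact mul_pos (by positivity) hT0
  -- key: exp(-2 s^2 / B) = δ / (2 * H.card)
  have hexp_eq : Real.exp (-2 * s ^ 2 / B) = δ / (2 * (H.card : ℝ)) := by
    have hsq1 : Real.sqrt ((1/2) * L) ^ 2 = (1/2) * L := Real.sq_sqrt (by positivity)
    have hsq2 : Real.sqrt T ^ 2 = T := Real.sq_sqrt hT0.le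
    have hs2 : s ^ 2 = Δ ^ 2 * ((1/2) * L) * T := by
      rw [hs_def]; rw [mul_pow, mul_pow, hsq1, hsq2]
    have harg : -2 * s ^ 2 / B = -L := by
      rw [hs2, hB_def]
      field_simp
    rw [harg, Real.exp_neg, hL_def, Real.exp_log (by positivity)]
    rw [inv_div]
  -- per-hypothesis bad event
  obtain ⟨Bad, hBad_def⟩ : ∃ Bad : (D → ℝ) → Set Ω, Bad = fun Rhat =>
      {ω | s ≤ ∑ d, P d * (ℓ (R d) (Rhat d) / Phat d)
              - ∑ d, O d ω * (ℓ (R d) (Rhat d) / Phat d)} := ⟨_, rfl⟩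
  have hBadMeas : ∀ Rhat, MeasurableSet (Bad Rhat) := by
    intro Rhat
    rw [hBad_def]
    apply measurableSet_le measurable_const
    exact Measurable.sub measurable_const
      (Finset.measurable_sum _ fun d _ => (hOmeas d).mul_const _)
  have hBadProb : ∀ Rhat ∈ H, (ℙ : Measure Ω) (Bad Rhat) ≤
      ENNReal.ofReal (δ / (2 * (H.card : ℝ))) := by
    intro Rhat _
    obtain ⟨c, hc_def⟩ : ∃ c : D → ℝ, c = fun d => ℓ (R d) (Rhat d) / Phat d := ⟨_, rfl⟩
    have hcB : ∑ d, c d ^ 2 ≤ B := by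
      rw [hB_def, hT_def, Finset.mul_sum]
      apply Finset.sum_le_sum
      intro d _
      have h1 := (hℓ (R d) (Rhat d)).1
      have h2 := (hℓ (R d) (Rhat d)).2
      have hp := (hPhat d).1
      have hp2 : (0:ℝ) < Phat d ^ 2 := by positivity
      calc c d ^ 2 = ℓ (R d) (Rhat d) ^ 2 / Phat d ^ 2 := by
            simp only [hc_def]; rw [div_pow]
        _ ≤ Δ ^ 2 / Phat d ^ 2 := (div_le_div_iff_of_pos_right hp2).2 (pow_le_pow_left₀ h1 h2 2)
        _ = Δ ^ 2 * (1 / Phat d ^ 2) := by ring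
    have := bernoulli_chernoff O hO01 hOmeas hOindep P (fun d => (hP d).1.le)
      (fun d => (hP d).2) hprob c s B hs0 hB0 hcB
    rw [hexp_eq] at this
    simp only [hc_def] at this
    rw [hBad_def]
    refine (ENNReal.le_ofReal_iff_toReal_le (measure_ne_top _ _) (by positivity)).2 ?_
    exact this
  -- union of bad events
  obtain ⟨U, hU_def⟩ : ∃ U : Set Ω, U = ⋃ Rhat ∈ H, Bad Rhat := ⟨_, rfl⟩
  have hUmeas : MeasurableSet U := by
    rw [hU_def]
    exact MeasurableSet.biUnion H.countable_toSet fun Rhat _ => hBadMeas Rhat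
  have hUprob : (ℙ : Measure Ω) U ≤ ENNReal.ofReal δ := by
    calc (ℙ : Measure Ω) U ≤ ∑ Rhat ∈ H, (ℙ : Measure Ω) (Bad Rhat) := by
          rw [hU_def]; exact measure_biUnion_finset_le H Bad
      _ ≤ ∑ Rhat ∈ H, ENNReal.ofReal (δ / (2 * (H.card : ℝ))) :=
          Finset.sum_le_sum hBadProb
      _ = H.card • ENNReal.ofReal (δ / (2 * (H.card : ℝ))) := by
          rw [Finset.sum_const]
      _ = ENNReal.ofReal ((H.card : ℝ) * (δ / (2 * (H.card : ℝ)))) := by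
          rw [nsmul_eq_mul, ← ENNReal.ofReal_natCast H.card,
            ← ENNReal.ofReal_mul (by positivity)]
      _ ≤ ENNReal.ofReal δ := by
          apply ENNReal.ofReal_le_ofReal
          rw [mul_div_assoc']
          rw [div_le_iff₀ (by positivity)]
          nlinarith
  -- the good event contains Uᶜ
  have hsub : Uᶜ ⊆ {ω | ∀ Rhat ∈ H,
        (1 / n) * ∑ d, ℓ (R d) (Rhat d) ≤
          (1 / n) * ∑ d, O d ω * ℓ (R d) (Rhat d) / Phat d
          + (Δ / n) * ∑ d, |1 - P d / Phat d|
          + (Δ / n) * Real.sqrt ((1 / 2) * L) * Real.sqrt T} := by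
    intro ω hω Rhat hRhat
    simp only [hU_def, Set.compl_iUnion, Set.mem_iInter] at hω
    have hω' := hω Rhat hRhat
    rw [Set.mem_compl_iff] at hω'
    simp only [hBad_def, Set.mem_setOf_eq, not_le] at hω'
    -- hω' : ∑ P c - ∑ O c < s
    obtain ⟨c, hc_def⟩ : ∃ c : D → ℝ, c = fun d => ℓ (R d) (Rhat d) / Phat d := ⟨_, rfl⟩
    have hdet : ∑ d, ℓ (R d) (Rhat d) ≤
        ∑ d, P d * c d + Δ * ∑ d, |1 - P d / Phat d| := by
      rw [Finset.mul_sum, ← Finset.sum_add_distrib]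
      apply Finset.sum_le_sum
      intro d _
      have h1 := (hℓ (R d) (Rhat d)).1
      have h2 := (hℓ (R d) (Rhat d)).2
      have hp := (hPhat d).1
      have key : ℓ (R d) (Rhat d) - P d * c d
          = ℓ (R d) (Rhat d) * (1 - P d / Phat d) := by
        rw [hc_def]
        field_simp
      have hb : ℓ (R d) (Rhat d) * (1 - P d / Phat d) ≤ Δ * |1 - P d / Phat d| := by
        rcases le_total 0 (1 - P d / Phat d) with h | h
        · rw [abs_of_nonneg h]
          exact mul_le_mul_of_nonneg_right h2 h |>.trans_eq rfl
          |>.trans (le_refl _)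
        · calc ℓ (R d) (Rhat d) * (1 - P d / Phat d) ≤ 0 :=
              mul_nonpos_of_nonneg_of_nonpos h1 h
            _ ≤ Δ * |1 - P d / Phat d| := by positivity
      linarith [key ▸ hb]
    have hS : ∑ d, O d ω * ℓ (R d) (Rhat d) / Phat d = ∑ d, O d ω * c d := by
      apply Finset.sum_congr rfl
      intro d _
      rw [hc_def, mul_div_assoc]
    simp only [hc_def] at hdet hS
    -- combine: ∑ℓ ≤ ∑Pc + Δ∑|..| < ∑Oc + s + Δ∑|..|
    have hcomb : ∑ d, ℓ (R d) (Rhat d) ≤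
        ∑ d, O d ω * ℓ (R d) (Rhat d) / Phat d + Δ * ∑ d, |1 - P d / Phat d| + s := by
      rw [hS]
      linarith
    have hn0' : (0:ℝ) < 1 / n := by positivity
    calc (1 / n) * ∑ d, ℓ (R d) (Rhat d)
        ≤ (1 / n) * (∑ d, O d ω * ℓ (R d) (Rhat d) / Phat d
            + Δ * ∑ d, |1 - P d / Phat d| + s) :=
          mul_le_mul_of_nonneg_left hcomb hn0'.le
      _ = (1 / n) * ∑ d, O d ω * ℓ (R d) (Rhat d) / Phat d
          + (Δ / n) * ∑ d, |1 - P d / Phat d|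
          + (Δ / n) * Real.sqrt ((1 / 2) * L) * Real.sqrt T := by
        rw [hs_def]
        field_simp
  -- conclude
  calc ENNReal.ofReal (1 - δ) ≤ 1 - ENNReal.ofReal δ := by
        refine ENNReal.le_sub_of_add_le_right ENNReal.ofReal_ne_top ?_
        rw [← ENNReal.ofReal_add (by linarith) hδ0.le]
        have h1 : (1 - δ) + δ = 1 := by ring
        rw [h1, ENNReal.ofReal_one]
    _ ≤ 1 - (ℙ : Measure Ω) U := tsub_le_tsub_left hUprob 1
    _ = (ℙ : Measure Ω) Uᶜ := by
        rw [measure_compl hUmeas (measure_ne_top _ _), measure_univ]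
    _ ≤ _ := measure_mono hsub
end

section
/- High-probability bound on the ideal loss against the pseudo-rating matrix (Equation (6) in the paper): Let D be a finite nonempty index set, N a positive real number, and for each d ∈ D let O'_d : Ω → {0, 1} be independent random variables. Let ℓ : ℝ × ℝ → ℝ satisfy 0 ≤ ℓ(x, y) ≤ Δ for a constant Δ > 0, let H be a finite nonempty set of functions D → ℝ, and let R̂¹ : D → ℝ be given. For R̂ ∈ H define L_ideal(R̂, R̂¹) = (1/|D|) · Σ_{d ∈ D} ℓ(R̂(d), R̂¹(d)), L̂_pseudo(R̂, R̂¹) = (1/N) · Σ_{d ∈ D} O'_d · ℓ(R̂(d), R̂¹(d)), and bias(R̂) = L_ideal(R̂, R̂¹) − E[L̂_pseudo(R̂, R̂¹)]. Then for any δ ∈ (0, 1), with probability at least 1 − δ, simultaneously for all R̂ ∈ H: L_ideal(R̂, R̂¹) ≤ L̂_pseudo(R̂, R̂¹) + bias(R̂) + (Δ/N) · √((|D|/2) · log(2|H|/δ)). -/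
set_option maxHeartbeats 1000000

open MeasureTheory ProbabilityTheory Real

section
variable {D : Type*} [Fintype D] {Ω : Type*} [MeasureSpace Ω]
  [IsProbabilityMeasure (ℙ : Measure Ω)]

lemma nonneg_of_hasDerivAt_sign {g g' : ℝ → ℝ}
    (hg : ∀ x, HasDerivAt g (g' x) x) (h0 : g 0 = 0)
    (hpos : ∀ x, 0 ≤ x → 0 ≤ g' x) (hneg : ∀ x, x ≤ 0 → g' x ≤ 0) :
    ∀ u, 0 ≤ g u := by
  intro u
  rcases le_total 0 u with hu | hu
  · have hmono : MonotoneOn g (Set.Ici (0:ℝ)) := by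
      refine monotoneOn_of_deriv_nonneg (convex_Ici 0)
        (fun x _ => (hg x).continuousAt.continuousWithinAt)
        (fun x hx => ((hg x).differentiableAt).differentiableWithinAt) ?_
      intro x hx
      rw [interior_Ici] at hx
      rw [(hg x).deriv]
      exact hpos x hx.le
    simpa [h0] using hmono Set.self_mem_Ici hu hu
  · have hanti : AntitoneOn g (Set.Iic (0:ℝ)) := by
      refine antitoneOn_of_deriv_nonpos (convex_Iic 0)
        (fun x _ => (hg x).continuousAt.continuousWithinAt)
        (fun x hx => ((hg x).differentiableAt).differentiableWithinAt) ?_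
      intro x hx
      rw [interior_Iic] at hx
      rw [(hg x).deriv]
      exact hneg x hx.le
    simpa [h0] using hanti hu Set.self_mem_Iic hu

lemma bern_hoeffding {p : ℝ} (hp0 : 0 ≤ p) (hp1 : p ≤ 1) (u : ℝ) :
    1 - p + p * exp u ≤ exp (p * u + u ^ 2 / 8) := by
  set Dn : ℝ → ℝ := fun u => 1 - p + p * exp u with hDn
  have hDpos : ∀ u, 0 < Dn u := by
    intro u
    have h := exp_pos u
    have h2 : 0 ≤ p * exp u := mul_nonneg hp0 h.le
    rcases lt_or_eq_of_le hp1 with h1 | h1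
    · simp only [hDn]; nlinarith
    · simp only [hDn, ← h1]; nlinarith
  set q : ℝ → ℝ := fun u => p * exp u / Dn u with hq
  have hDd : ∀ u, HasDerivAt Dn (p * exp u) u := by
    intro u
    exact ((Real.hasDerivAt_exp u).const_mul p).const_add (1 - p)
  have hqd : ∀ u, HasDerivAt q (q u * (1 - q u)) u := by
    intro u
    have h := ((Real.hasDerivAt_exp u).const_mul p).div (hDd u) (hDpos u).ne'
    refine h.congr_deriv ?_
    have hD := (hDpos u).ne'
    simp only [hq, hDn] at hD ⊢
    field_simp
  have hq0 : q 0 = p := by simp [hq, hDn]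
  have hqle : ∀ u, q u * (1 - q u) ≤ 1 / 4 := by
    intro u; nlinarith [sq_nonneg (q u - 1/2)]
  -- h = p + u/4 - q u  has nonneg derivative, h 0 = 0
  set h : ℝ → ℝ := fun u => p + u / 4 - q u with hh
  have hhd : ∀ u, HasDerivAt h (1 / 4 - q u * (1 - q u)) u := by
    intro u
    exact ((hasDerivAt_id u).div_const 4).const_add p |>.sub (hqd u)
  have hhmono : Monotone h :=
    monotone_of_deriv_nonneg (fun x => (hhd x).differentiableAt)
      (fun x => by rw [(hhd x).deriv]; linarith [hqle x])
  have hh0 : h 0 = 0 := by simp [hh, hq0]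
  -- f = p*u + u^2/8 - log (Dn u)
  set f : ℝ → ℝ := fun u => p * u + u ^ 2 / 8 - Real.log (Dn u) with hf
  have hfd : ∀ u, HasDerivAt f (h u) u := by
    intro u
    have h1 : HasDerivAt (fun u => p * u + u ^ 2 / 8) (p + u / 4) u := by
      have := ((hasDerivAt_pow 2 u).div_const 8).const_add (p * u)
      have h2 := (hasDerivAt_id u).const_mul p
      exact (h2.add ((hasDerivAt_pow 2 u).div_const 8)) |>.congr_deriv (by ring)
    have h3 : HasDerivAt (fun u => Real.log (Dn u)) (p * exp u / Dn u) u :=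
      (hDd u).log (hDpos u).ne'
    exact h1.sub h3
  have hf0 : f 0 = 0 := by simp [hf, hDn]
  have hfnn : ∀ u, 0 ≤ f u := by
    refine nonneg_of_hasDerivAt_sign hfd hf0 ?_ ?_
    · intro x hx; rw [← hh0]; exact hhmono hx
    · intro x hx
      have : h x ≤ h 0 := hhmono hx
      rw [hh0] at this; exact this
  have hnn := hfnn u
  simp only [hf] at hnn
  have hlog : Real.log (Dn u) ≤ p * u + u ^ 2 / 8 := by linarith
  exact (Real.log_le_iff_le_exp (hDpos u)).mp hlog

lemma chernoff_sum (O' : D → Ω → ℝ)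
    (hO01 : ∀ d ω, O' d ω = 0 ∨ O' d ω = 1)
    (hOmeas : ∀ d, Measurable (O' d))
    (hOindep : iIndepFun O' ℙ)
    (c : D → ℝ) (Δ : ℝ) (hc0 : ∀ d, 0 ≤ c d) (hcΔ : ∀ d, c d ≤ Δ)
    (t ε' : ℝ) (ht : 0 ≤ t) :
    ((ℙ : Measure Ω) {ω | ε' ≤ ∑ d, (c d * (∫ ω', O' d ω') - c d * O' d ω)}).toReal ≤
      exp (-t * ε' + (Fintype.card D : ℝ) * (t ^ 2 * Δ ^ 2 / 8)) := by
  have hint : ∀ d, Integrable (O' d) ℙ := by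
    intro d
    refine ⟨(hOmeas d).aestronglyMeasurable, ?_⟩
    refine HasFiniteIntegral.of_bounded (C := 1) (ae_of_all _ fun ω => ?_)
    rcases hO01 d ω with h | h <;> simp [h]
  set p : D → ℝ := fun d => ∫ ω', O' d ω' with hp
  have hp0 : ∀ d, 0 ≤ p d := fun d =>
    integral_nonneg fun ω => by rcases hO01 d ω with h | h <;> simp [h]
  have hp1 : ∀ d, p d ≤ 1 := by
    intro d
    calc p d ≤ ∫ (_ : Ω), (1 : ℝ) := by
          refine integral_mono (hint d) (integrable_const 1) fun ω => ?_
          rcases hO01 d ω with h | h <;> simp [h]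
      _ = 1 := by simp
  set X : D → Ω → ℝ := fun d ω => c d * p d - c d * O' d ω with hX
  have hXmeas : ∀ d, Measurable (X d) :=
    fun d => (measurable_const.sub ((hOmeas d).const_mul _))
  have hXindep : iIndepFun X ℙ := by
    have := hOindep.comp (fun d (x : ℝ) => c d * p d - c d * x)
      (fun d => measurable_const.sub (measurable_id.const_mul _))
    exact this
  -- key pointwise identity
  have hkey : ∀ (s : ℝ) d ω, exp (s * O' d ω) = 1 + (exp s - 1) * O' d ω := by
    intro s d ω
    rcases hO01 d ω with h | h <;> simp [h]
  have hexp_eq : ∀ d, (fun ω => exp (t * X d ω)) =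
      fun ω => exp (t * (c d * p d)) + exp (t * (c d * p d)) * (exp (-(t * c d)) - 1) * O' d ω := by
    intro d
    funext ω
    have : t * X d ω = t * (c d * p d) + (-(t * c d)) * O' d ω := by
      simp only [hX]; ring
    rw [this, exp_add, hkey (-(t * c d)) d ω]
    ring
  have hexp_int : ∀ d, Integrable (fun ω => exp (t * X d ω)) ℙ := by
    intro d
    rw [hexp_eq d]
    exact (integrable_const _).add ((hint d).const_mul _)
  have hmgf : ∀ d, mgf (X d) ℙ t =
      exp (t * (c d * p d)) * (1 - p d + p d * exp (-(t * c d))) := by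
    intro d
    unfold mgf
    rw [hexp_eq d]
    rw [integral_add (integrable_const _) ((hint d).const_mul _),
      integral_const_mul, integral_const]
    simp only [measure_univ, probReal_univ, ENNReal.toReal_one, smul_eq_mul, one_mul]
    have hpd : ∫ (a : Ω), O' d a = p d := rfl
    rw [hpd]; ring
  have hmgf_le : ∀ d, mgf (X d) ℙ t ≤ exp (t ^ 2 * Δ ^ 2 / 8) := by
    intro d
    rw [hmgf d]
    have hb := bern_hoeffding (hp0 d) (hp1 d) (-(t * c d))
    have h1 : exp (t * (c d * p d)) * (1 - p d + p d * exp (-(t * c d))) ≤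
        exp (t * (c d * p d)) * exp (p d * -(t * c d) + (-(t * c d)) ^ 2 / 8) :=
      mul_le_mul_of_nonneg_left hb (exp_pos _).le
    refine h1.trans ?_
    rw [← exp_add]
    apply exp_le_exp.mpr
    have hcd2 : (t * c d) ^ 2 ≤ t ^ 2 * Δ ^ 2 := by
      have : c d ^ 2 ≤ Δ ^ 2 := pow_le_pow_left₀ (hc0 d) (hcΔ d) 2
      calc (t * c d) ^ 2 = t ^ 2 * c d ^ 2 := by ring
        _ ≤ t ^ 2 * Δ ^ 2 := by nlinarith [sq_nonneg t]
    nlinarith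
  have hint_sum : Integrable (fun ω => exp (t * (∑ d, X d) ω)) ℙ :=
    hXindep.integrable_exp_mul_sum hXmeas fun d _ => hexp_int d
  have hchern := measure_ge_le_exp_mul_mgf (X := ∑ d, X d) ε' ht hint_sum
  have hset : {ω | ε' ≤ (∑ d, X d) ω} =
      {ω | ε' ≤ ∑ d, (c d * (∫ ω', O' d ω') - c d * O' d ω)} := by
    ext ω; simp only [hX, hp, Finset.sum_apply, Set.mem_setOf_eq]
  rw [hset] at hchern
  refine hchern.trans ?_
  rw [hXindep.mgf_sum hXmeas]
  have hprod : ∏ d, mgf (X d) ℙ t ≤ ∏ (_ : D), exp (t ^ 2 * Δ ^ 2 / 8) :=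
    Finset.prod_le_prod (fun d _ => mgf_nonneg) fun d _ => hmgf_le d
  calc exp (-t * ε') * ∏ d, mgf (X d) ℙ t
      ≤ exp (-t * ε') * ∏ (_ : D), exp (t ^ 2 * Δ ^ 2 / 8) :=
        mul_le_mul_of_nonneg_left hprod (exp_pos _).le
    _ = exp (-t * ε' + (Fintype.card D : ℝ) * (t ^ 2 * Δ ^ 2 / 8)) := by
        rw [Finset.prod_const, ← Real.exp_nat_mul, ← exp_add, Finset.card_univ]

end

/-- Equation (6) of the paper: with probability at least `1 - δ`, simultaneously for all
`R̂` in the finite hypothesis space `H`,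
`L_ideal(R̂, R̂¹) ≤ L̂_pseudo(R̂, R̂¹) + bias(L̂_pseudo(R̂, R̂¹))
  + (Δ/N)·√((|D|/2)·log(2|H|/δ))`,
where `L_ideal(R̂, R̂¹) = (1/|D|)·∑ d, ℓ(R̂ d, R̂¹ d)`,
`L̂_pseudo(R̂, R̂¹) = (1/N)·∑ d, O' d · ℓ(R̂ d, R̂¹ d)` and
`bias = L_ideal(R̂, R̂¹) - E[L̂_pseudo(R̂, R̂¹)]`. -/
theorem ideal_loss_pseudo_bound {D : Type*} [Fintype D] [Nonempty D]
    {Ω : Type*} [MeasureSpace Ω] [IsProbabilityMeasure (ℙ : Measure Ω)]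
    (O' : D → Ω → ℝ)
    (hO01 : ∀ d ω, O' d ω = 0 ∨ O' d ω = 1)
    (hOmeas : ∀ d, Measurable (O' d))
    (hOindep : iIndepFun O' ℙ)
    (N : ℝ) (hN : 0 < N)
    (Δ : ℝ) (hΔ : 0 < Δ)
    (ℓ : ℝ → ℝ → ℝ) (hℓ : ∀ x y, ℓ x y ∈ Set.Icc (0 : ℝ) Δ)
    (Rhat₁ : D → ℝ)
    (H : Finset (D → ℝ)) (hH : H.Nonempty)
    (δ : ℝ) (hδ : δ ∈ Set.Ioo (0 : ℝ) 1) :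
    ENNReal.ofReal (1 - δ) ≤
      (ℙ : Measure Ω) {ω | ∀ Rhat ∈ H,
        (1 / (Fintype.card D : ℝ)) * ∑ d, ℓ (Rhat d) (Rhat₁ d) ≤
          (1 / N) * ∑ d, O' d ω * ℓ (Rhat d) (Rhat₁ d)
          + ((1 / (Fintype.card D : ℝ)) * ∑ d, ℓ (Rhat d) (Rhat₁ d) -
              ∫ ω', (1 / N) * ∑ d, O' d ω' * ℓ (Rhat d) (Rhat₁ d) ∂(ℙ : Measure Ω))
          + (Δ / N) * Real.sqrt (((Fintype.card D : ℝ) / 2) *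
              Real.log (2 * (H.card : ℝ) / δ))} := by
  classical
  obtain ⟨hδ0, hδ1⟩ := hδ
  have hint : ∀ d, Integrable (O' d) ℙ := by
    intro d
    refine ⟨(hOmeas d).aestronglyMeasurable, ?_⟩
    refine HasFiniteIntegral.of_bounded (C := 1) (ae_of_all _ fun ω => ?_)
    rcases hO01 d ω with h | h <;> simp [h]
  set n : ℝ := (Fintype.card D : ℝ) with hn
  have hn0 : 0 < n := by
    have : 0 < Fintype.card D := Fintype.card_pos
    rw [hn]; exact_mod_cast this
  have hcard1 : (1 : ℝ) ≤ (H.card : ℝ) := by exact_mod_cast hH.card_pos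
  set L : ℝ := Real.log (2 * (H.card : ℝ) / δ) with hL
  have hLpos : 0 < L := by
    rw [hL]
    apply Real.log_pos
    rw [lt_div_iff₀ hδ0]
    linarith
  set ε' : ℝ := Δ * Real.sqrt (n / 2 * L) with hε'
  have hsqrt0 : 0 ≤ Real.sqrt (n / 2 * L) := Real.sqrt_nonneg _
  have hε'0 : 0 ≤ ε' := by rw [hε']; positivity
  set t : ℝ := 4 * ε' / (n * Δ ^ 2) with ht
  have ht0 : 0 ≤ t := by rw [ht]; positivity
  have hsq : ε' ^ 2 = Δ ^ 2 * (n / 2 * L) := by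
    rw [hε', mul_pow, Real.sq_sqrt (by positivity)]
  have hexp_eq : -t * ε' + n * (t ^ 2 * Δ ^ 2 / 8) = -L := by
    have h1 : -t * ε' + n * (t ^ 2 * Δ ^ 2 / 8) = -(2 * ε' ^ 2) / (n * Δ ^ 2) := by
      rw [ht]; field_simp; ring
    rw [h1, hsq]; field_simp
  have hexpL : Real.exp (-L) = δ / (2 * (H.card : ℝ)) := by
    rw [hL, ← Real.log_inv, Real.exp_log (by positivity), inv_div]
  set bad : (D → ℝ) → Set Ω := fun R =>
    {ω | ε' ≤ ∑ d, (ℓ (R d) (Rhat₁ d) * (∫ ω', O' d ω') - ℓ (R d) (Rhat₁ d) * O' d ω)}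
    with hbadDef
  have hbadmeas : ∀ R, MeasurableSet (bad R) := by
    intro R
    exact measurableSet_le measurable_const
      (Finset.measurable_sum Finset.univ fun d _ =>
        measurable_const.sub ((hOmeas d).const_mul _))
  have hbadP : ∀ R ∈ H, (ℙ : Measure Ω) (bad R) ≤ ENNReal.ofReal (δ / (2 * (H.card : ℝ))) := by
    intro R hR
    have h := chernoff_sum O' hO01 hOmeas hOindep (fun d => ℓ (R d) (Rhat₁ d)) Δ
      (fun d => (hℓ _ _).1) (fun d => (hℓ _ _).2) t ε' ht0
    rw [hexp_eq, hexpL] at h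
    rw [← ENNReal.ofReal_toReal (measure_ne_top (ℙ : Measure Ω) (bad R))]
    exact ENNReal.ofReal_le_ofReal h
  set good : Set Ω := ⋂ R ∈ H, (bad R)ᶜ with hgood
  have hgoodmeas : MeasurableSet good :=
    Finset.measurableSet_biInter H fun R _ => (hbadmeas R).compl
  have hcompl : (ℙ : Measure Ω) goodᶜ ≤ ENNReal.ofReal δ := by
    have he : goodᶜ = ⋃ R ∈ H, bad R := by
      rw [hgood, Set.compl_iInter₂]
      simp
    rw [he]
    calc (ℙ : Measure Ω) (⋃ R ∈ H, bad R) ≤ ∑ R ∈ H, (ℙ : Measure Ω) (bad R) :=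
          measure_biUnion_finset_le H bad
      _ ≤ ∑ R ∈ H, ENNReal.ofReal (δ / (2 * (H.card : ℝ))) := Finset.sum_le_sum hbadP
      _ = (H.card : ENNReal) * ENNReal.ofReal (δ / (2 * (H.card : ℝ))) := by
          rw [Finset.sum_const, nsmul_eq_mul]
      _ = ENNReal.ofReal ((H.card : ℝ) * (δ / (2 * (H.card : ℝ)))) := by
          rw [ENNReal.ofReal_mul (Nat.cast_nonneg _), ENNReal.ofReal_natCast]
      _ ≤ ENNReal.ofReal δ := by
          apply ENNReal.ofReal_le_ofReal
          have hc0 : (H.card : ℝ) ≠ 0 := by linarith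
          rw [mul_div_assoc']
          rw [div_le_iff₀ (by positivity)]
          nlinarith
  have hgoodP : ENNReal.ofReal (1 - δ) ≤ (ℙ : Measure Ω) good := by
    have hadd : (ℙ : Measure Ω) good + (ℙ : Measure Ω) goodᶜ = 1 := by
      rw [measure_add_measure_compl hgoodmeas, measure_univ]
    have h2 : ENNReal.ofReal (1 - δ) + ENNReal.ofReal δ = 1 := by
      rw [← ENNReal.ofReal_add (by linarith) hδ0.le]
      norm_num
    have h3 : ENNReal.ofReal (1 - δ) + ENNReal.ofReal δ ≤
        (ℙ : Measure Ω) good + ENNReal.ofReal δ := by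
      rw [h2, ← hadd]
      exact add_le_add le_rfl hcompl
    exact (ENNReal.add_le_add_iff_right ENNReal.ofReal_ne_top).mp h3
  refine hgoodP.trans (measure_mono ?_)
  intro ω hω
  simp only [hgood, Set.mem_iInter, Set.mem_compl_iff, hbadDef, Set.mem_setOf_eq] at hω
  intro R hR
  have hω' : ∑ d, (ℓ (R d) (Rhat₁ d) * (∫ ω', O' d ω') - ℓ (R d) (Rhat₁ d) * O' d ω) < ε' :=
    lt_of_not_ge (hω R hR)
  have hI : (∫ ω', (1 / N) * ∑ d, O' d ω' * ℓ (R d) (Rhat₁ d) ∂(ℙ : Measure Ω)) =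
      (1 / N) * ∑ d, (∫ ω', O' d ω') * ℓ (R d) (Rhat₁ d) := by
    rw [integral_const_mul]
    congr 1
    rw [integral_finset_sum Finset.univ fun d _ => (hint d).mul_const _]
    exact Finset.sum_congr rfl fun d _ => integral_mul_const _ _
  rw [hI]
  have hkey : ∑ d, ℓ (R d) (Rhat₁ d) * (∫ ω', O' d ω') -
      ∑ d, ℓ (R d) (Rhat₁ d) * O' d ω < ε' := by
    rw [← Finset.sum_sub_distrib]; exact hω'
  have e1 : ∑ d, (∫ ω', O' d ω') * ℓ (R d) (Rhat₁ d) =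
      ∑ d, ℓ (R d) (Rhat₁ d) * (∫ ω', O' d ω') :=
    Finset.sum_congr rfl fun d _ => mul_comm _ _
  have e2 : ∑ d, O' d ω * ℓ (R d) (Rhat₁ d) =
      ∑ d, ℓ (R d) (Rhat₁ d) * O' d ω :=
    Finset.sum_congr rfl fun d _ => mul_comm _ _
  have h5 : (Δ / N) * Real.sqrt (n / 2 * L) = (1 / N) * ε' := by
    rw [hε']; ring
  have hmul : (1 / N) * (∑ d, ℓ (R d) (Rhat₁ d) * (∫ ω', O' d ω') -
      ∑ d, ℓ (R d) (Rhat₁ d) * O' d ω) ≤ (1 / N) * ε' :=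
    mul_le_mul_of_nonneg_left hkey.le (by positivity)
  rw [e1, e2]
  have expand : (1 / N) * (∑ d, ℓ (R d) (Rhat₁ d) * (∫ ω', O' d ω') -
      ∑ d, ℓ (R d) (Rhat₁ d) * O' d ω) =
      (1 / N) * ∑ d, ℓ (R d) (Rhat₁ d) * (∫ ω', O' d ω') -
      (1 / N) * ∑ d, ℓ (R d) (Rhat₁ d) * O' d ω := by ring
  rw [expand] at hmul
  linarith [hmul, h5]
end

section
/- Propensity-independent generalization error bound (Theorem 2 of the paper): Let D be a finite nonempty index set, N a positive real number, and for each d ∈ D let O'_d : Ω → {0, 1} be independent random variables. Let ℓ : ℝ × ℝ → ℝ be a loss function satisfying the triangle inequality ℓ(x, z) ≤ ℓ(x, y) + ℓ(y, z) and 0 ≤ ℓ(x, y) ≤ Δ for a constant Δ > 0. Let R, R̂¹, R̂² : D → ℝ be given (the true ratings and the two pre-trained predictors' outputs) and let H be a finite nonempty set of functions D → ℝ. Define L_ideal(A, B) = (1/|D|) · Σ_{d ∈ D} ℓ(A(d), B(d)), L̂_pseudo(R̂, R̂¹) = (1/N) · Σ_{d ∈ D} O'_d · ℓ(R̂(d),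 R̂¹(d)), and bias(R̂) = L_ideal(R̂, R̂¹) − E[L̂_pseudo(R̂, R̂¹)]. Then for any δ ∈ (0, 1), with probability at least 1 − δ, simultaneously for all R̂ ∈ H: L_ideal(R̂, R) ≤ L̂_pseudo(R̂, R̂¹) + bias(R̂) + L_ideal(R̂¹, R̂²) + L_ideal(R̂², R) + (Δ/N) · √((|D|/2) · log(2|H|/δ)). -/
open MeasureTheory ProbabilityTheory

section HoeffdingAux
open Real

lemma bern_key_nonneg {p : ℝ} (hp0 : 0 ≤ p) (hp1 : p ≤ 1) {u : ℝ} (hu : 0 ≤ u) :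
    Real.log (1 - p + p * Real.exp u) ≤ p * u + u ^ 2 / 8 := by
  set D : ℝ → ℝ := fun u => 1 - p + p * Real.exp u with hDdef
  have hD : ∀ x, 0 < D x := by
    intro x
    rcases eq_or_lt_of_le hp1 with h | h
    · simp only [hDdef, h]; simpa using Real.exp_pos x
    · have : 0 ≤ p * Real.exp x := mul_nonneg hp0 (Real.exp_pos x).le
      simp only [hDdef]; linarith
  have hDcont : Continuous D := by continuity
  have hDderiv : ∀ x, HasDerivAt D (p * Real.exp x) x := by
    intro x
    exact ((Real.hasDerivAt_exp x).const_mul p).const_add (1 - p)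
  -- inner function G
  set G : ℝ → ℝ := fun u => u / 4 - (p * Real.exp u / D u - p) with hGdef
  have hGderiv : ∀ x, HasDerivAt G
      (1 / 4 - (p * Real.exp x * D x - p * Real.exp x * (p * Real.exp x)) / (D x) ^ 2) x := by
    intro x
    have h1 : HasDerivAt (fun u => p * Real.exp u) (p * Real.exp x) x :=
      (Real.hasDerivAt_exp x).const_mul p
    have h2 := (h1.div (hDderiv x) (hD x).ne')
    have h3 : HasDerivAt (fun u : ℝ => u / 4) (1 / 4) x := by
      simpa using (hasDerivAt_id x).div_const 4
    exact h3.sub (h2.sub_const p)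
  have hGmono : MonotoneOn G (Set.Ici (0 : ℝ)) := by
    apply monotoneOn_of_deriv_nonneg (convex_Ici 0)
    · exact ((continuous_id.div_const 4).sub
        (((continuous_const.mul Real.continuous_exp).div hDcont fun x => (hD x).ne').sub
          continuous_const)).continuousOn
    · intro x _
      exact (hGderiv x).differentiableAt.differentiableWithinAt
    · intro x _
      rw [(hGderiv x).deriv]
      have hDx := hD x
      have he := Real.exp_pos x
      have key : (p * Real.exp x * D x - p * Real.exp x * (p * Real.exp x)) / (D x) ^ 2 ≤ 1 / 4 := by
        rw [div_le_iff₀ (by positivity)]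
        have hDval : D x = 1 - p + p * Real.exp x := rfl
        nlinarith [sq_nonneg (1 - p - p * Real.exp x), mul_nonneg hp0 he.le]
      linarith
  have hG0 : G 0 = 0 := by simp [hGdef, hDdef]
  have hGge : ∀ x, 0 ≤ x → 0 ≤ G x := by
    intro x hx
    have := hGmono (Set.self_mem_Ici) (Set.mem_Ici.2 hx) hx
    rwa [hG0] at this
  -- outer function F
  set F : ℝ → ℝ := fun u => p * u + u ^ 2 / 8 - Real.log (D u) with hFdef
  have hFderiv : ∀ x, HasDerivAt F (p + x / 4 - p * Real.exp x / D x) x := by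
    intro x
    have hlog : HasDerivAt (fun u => Real.log (D u)) (p * Real.exp x / D x) x :=
      (hDderiv x).log (hD x).ne'
    have h1 : HasDerivAt (fun u : ℝ => p * u + u ^ 2 / 8) (p + 2 * x / 8) x := by
      have := ((hasDerivAt_pow 2 x).div_const 8).const_add 0
      have h2 : HasDerivAt (fun u : ℝ => p * u) p x := by
        simpa using (hasDerivAt_id x).const_mul p
      exact (h2.add ((hasDerivAt_pow 2 x).div_const 8)).congr_deriv (by norm_num)
    have := h1.sub hlog
    exact this.congr_deriv (by ring)
  have hFmono : MonotoneOn F (Set.Ici (0 : ℝ)) := by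
    apply monotoneOn_of_deriv_nonneg (convex_Ici 0)
    · exact ((continuous_const.mul continuous_id).add
        ((continuous_pow 2).div_const 8)).sub
        (hDcont.log fun x => (hD x).ne') |>.continuousOn
    · intro x _
      exact (hFderiv x).differentiableAt.differentiableWithinAt
    · intro x hx
      rw [(hFderiv x).deriv]
      have := hGge x (le_of_lt (by simpa using hx))
      simp only [hGdef] at this
      linarith
  have hF0 : F 0 = 0 := by simp [hFdef, hDdef]
  have := hFmono (Set.self_mem_Ici) (Set.mem_Ici.2 hu) hu
  rw [hF0] at this
  simp only [hFdef] at this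
  linarith

lemma bern_key {p : ℝ} (hp0 : 0 ≤ p) (hp1 : p ≤ 1) (u : ℝ) :
    1 - p + p * Real.exp u ≤ Real.exp (p * u + u ^ 2 / 8) := by
  have hD : 0 < 1 - p + p * Real.exp u := by
    rcases eq_or_lt_of_le hp1 with h | h
    · subst h; simpa using Real.exp_pos u
    · have : 0 ≤ p * Real.exp u := mul_nonneg hp0 (Real.exp_pos u).le
      linarith
  rcases le_or_gt 0 u with hu | hu
  · rw [← Real.exp_log hD]
    exact Real.exp_le_exp.2 (bern_key_nonneg hp0 hp1 hu)
  · -- symmetry : use p' = 1 - p, u' = -u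
    have h := bern_key_nonneg (p := 1 - p) (by linarith) (by linarith) (u := -u) (by linarith)
    have hexp : 1 - (1 - p) + (1 - p) * Real.exp (-u)
        = Real.exp (-u) * (1 - p + p * Real.exp u) := by
      rw [Real.exp_neg]
      field_simp
      ring
    rw [hexp, Real.log_mul (Real.exp_ne_zero _) hD.ne', Real.log_exp] at h
    have : Real.log (1 - p + p * Real.exp u) ≤ p * u + u ^ 2 / 8 := by nlinarith
    rw [← Real.exp_log hD]
    exact Real.exp_le_exp.2 this

lemma hoeff_tail {Ω : Type*} [MeasureSpace Ω] [IsProbabilityMeasure (ℙ : Measure Ω)]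
    {D : Type*} [Fintype D] [Nonempty D]
    (O' : D → Ω → ℝ) (hO01 : ∀ d ω, O' d ω = 0 ∨ O' d ω = 1)
    (hOmeas : ∀ d, Measurable (O' d))
    (hOindep : iIndepFun O' ℙ)
    (Δ : ℝ) (hΔ : 0 < Δ) (c : D → ℝ) (hc : ∀ d, c d ∈ Set.Icc 0 Δ)
    (a : ℝ) (ha : 0 < a) :
    (ℙ : Measure Ω) {ω | a ≤ ∑ d, ((∫ ω', O' d ω' ∂(ℙ : Measure Ω)) * c d - O' d ω * c d)} ≤
      ENNReal.ofReal (Real.exp (-2 * a ^ 2 / (Fintype.card D * Δ ^ 2))) := by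
  have hn : 0 < (Fintype.card D : ℝ) := by positivity
  set n : ℝ := (Fintype.card D : ℝ)
  set t : ℝ := 4 * a / (n * Δ ^ 2) with ht_def
  have ht : 0 < t := by positivity
  set μd : D → ℝ := fun d => ∫ ω', O' d ω' ∂(ℙ : Measure Ω) with hμdef
  -- integrability and bounds on O'
  have hOnonneg : ∀ d ω, 0 ≤ O' d ω := by
    intro d ω; rcases hO01 d ω with h | h <;> simp [h]
  have hOle1 : ∀ d ω, O' d ω ≤ 1 := by
    intro d ω; rcases hO01 d ω with h | h <;> simp [h]
  have hOint : ∀ d, Integrable (O' d) (ℙ : Measure Ω) := by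
    intro d
    refine Integrable.mono' (integrable_const 1) (hOmeas d).aestronglyMeasurable ?_
    filter_upwards with ω
    rw [Real.norm_eq_abs, abs_of_nonneg (hOnonneg d ω)]; exact hOle1 d ω
  have hμ0 : ∀ d, 0 ≤ μd d := fun d => integral_nonneg (hOnonneg d)
  have hμ1 : ∀ d, μd d ≤ 1 := by
    intro d
    calc μd d ≤ ∫ _, (1 : ℝ) ∂(ℙ : Measure Ω) :=
          integral_mono (hOint d) (integrable_const 1) (hOle1 d)
      _ = 1 := by simp
  -- centered variables
  set g : D → ℝ → ℝ := fun d x => μd d * c d - x * c d with hgdef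
  set X : D → Ω → ℝ := fun d => g d ∘ O' d with hXdef
  have hXmeas : ∀ d, Measurable (X d) := by
    intro d
    exact (measurable_const.sub (measurable_id.mul_const (c d))).comp (hOmeas d)
  have hXindep : iIndepFun X ℙ :=
    hOindep.comp g (fun d => measurable_const.sub (measurable_id.mul_const (c d)))
  -- bound |X d ω| ≤ Δ
  have hcd := hc
  have hXbd : ∀ d ω, |X d ω| ≤ Δ := by
    intro d ω
    have h1 := (hc d).1; have h2 := (hc d).2
    have h3 := hμ0 d; have h4 := hμ1 d
    have h5 := hOnonneg d ω; have h6 := hOle1 d ω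
    rw [abs_le]
    constructor <;> simp only [hXdef, hgdef, Function.comp_apply] <;> nlinarith
  have hint : ∀ d, Integrable (fun ω => Real.exp (t * X d ω)) (ℙ : Measure Ω) := by
    intro d
    refine Integrable.mono' (integrable_const (Real.exp (t * Δ)))
      (((hXmeas d).const_mul t).exp).aestronglyMeasurable ?_
    filter_upwards with ω
    rw [Real.norm_eq_abs, abs_of_nonneg (Real.exp_pos _).le]
    apply Real.exp_le_exp.2
    have := (abs_le.1 (hXbd d ω)).2
    nlinarith [ht.le]
  -- mgf of each X d
  have hmgf : ∀ d, mgf (X d) (ℙ : Measure Ω) t ≤ Real.exp (t ^ 2 * Δ ^ 2 / 8) := by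
    intro d
    have hpt : ∀ ω, Real.exp (t * X d ω)
        = Real.exp (t * (μd d * c d)) * (1 + O' d ω * (Real.exp (-(t * c d)) - 1)) := by
      intro ω
      rcases hO01 d ω with h | h
      · simp [hXdef, hgdef, Function.comp_apply, h, mul_sub]
      · simp only [hXdef, hgdef, Function.comp_apply, h, one_mul]
        rw [show (1:ℝ) + (Real.exp (-(t * c d)) - 1) = Real.exp (-(t * c d)) by ring,
          ← Real.exp_add]
        congr 1; ring
    have hint2 : mgf (X d) (ℙ : Measure Ω) t
        = Real.exp (t * (μd d * c d)) * (1 + μd d * (Real.exp (-(t * c d)) - 1)) := by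
      unfold mgf
      simp_rw [hpt]
      rw [integral_const_mul]
      congr 1
      rw [integral_add (integrable_const 1) ((hOint d).mul_const _), integral_const]
      simp [integral_mul_const, hμdef]
    rw [hint2]
    have hkey := bern_key (hμ0 d) (hμ1 d) (-(t * c d))
    have h1 : 1 + μd d * (Real.exp (-(t * c d)) - 1)
        = 1 - μd d + μd d * Real.exp (-(t * c d)) := by ring
    rw [h1]
    calc Real.exp (t * (μd d * c d)) * (1 - μd d + μd d * Real.exp (-(t * c d)))
        ≤ Real.exp (t * (μd d * c d)) *
          Real.exp (μd d * (-(t * c d)) + (-(t * c d)) ^ 2 / 8) := by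
          apply mul_le_mul_of_nonneg_left hkey (Real.exp_pos _).le
      _ = Real.exp (t ^ 2 * c d ^ 2 / 8) := by
          rw [← Real.exp_add]; congr 1; ring
      _ ≤ Real.exp (t ^ 2 * Δ ^ 2 / 8) := by
          apply Real.exp_le_exp.2
          have h2 := (hc d).1; have h3 := (hc d).2
          have h4 : c d ^ 2 ≤ Δ ^ 2 := by nlinarith
          have h5 := mul_le_mul_of_nonneg_left h4 (sq_nonneg t)
          linarith
  -- mgf of the sum
  have hmgfsum : mgf (∑ d, X d) (ℙ : Measure Ω) t ≤ Real.exp (t ^ 2 * n * Δ ^ 2 / 8) := by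
    rw [hXindep.mgf_sum hXmeas]
    calc ∏ d, mgf (X d) (ℙ : Measure Ω) t ≤ ∏ _d : D, Real.exp (t ^ 2 * Δ ^ 2 / 8) :=
          Finset.prod_le_prod (fun d _ => mgf_nonneg) (fun d _ => hmgf d)
      _ = Real.exp (t ^ 2 * Δ ^ 2 / 8) ^ Fintype.card D := by
          rw [Finset.prod_const, Finset.card_univ]
      _ = Real.exp (t ^ 2 * n * Δ ^ 2 / 8) := by
          rw [← Real.exp_nat_mul]; congr 1; ring
  -- Chernoff
  have hintsum : Integrable (fun ω => Real.exp (t * (∑ d, X d) ω)) (ℙ : Measure Ω) :=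
    hXindep.integrable_exp_mul_sum hXmeas (fun d _ => hint d)
  have hcher := measure_ge_le_exp_mul_mgf (μ := (ℙ : Measure Ω)) (X := ∑ d, X d) a ht.le hintsum
  have hfinal : Real.exp (-t * a) * mgf (∑ d, X d) (ℙ : Measure Ω) t
      ≤ Real.exp (-2 * a ^ 2 / (n * Δ ^ 2)) := by
    calc Real.exp (-t * a) * mgf (∑ d, X d) (ℙ : Measure Ω) t
        ≤ Real.exp (-t * a) * Real.exp (t ^ 2 * n * Δ ^ 2 / 8) :=
          mul_le_mul_of_nonneg_left hmgfsum (Real.exp_pos _).le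
      _ = Real.exp (-t * a + t ^ 2 * n * Δ ^ 2 / 8) := by rw [← Real.exp_add]
      _ = Real.exp (-2 * a ^ 2 / (n * Δ ^ 2)) := by
          congr 1
          rw [ht_def]
          field_simp
          ring
  have hsetswap : {ω | a ≤ ∑ d, (μd d * c d - O' d ω * c d)} = {ω | a ≤ (∑ d, X d) ω} := by
    ext ω
    simp [hXdef, hgdef, Function.comp_apply]
  rw [show {ω | a ≤ ∑ d, ((∫ ω', O' d ω' ∂(ℙ : Measure Ω)) * c d - O' d ω * c d)}
      = {ω | a ≤ (∑ d, X d) ω} from hsetswap]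
  rw [← ENNReal.ofReal_toReal (measure_ne_top (ℙ : Measure Ω) _)]
  exact ENNReal.ofReal_le_ofReal (le_trans hcher hfinal)

end HoeffdingAux

/-- Theorem 2 of the paper (propensity-independent generalization error bound): if the loss
`ℓ` is bounded in `[0, Δ]` and obeys the triangle inequality, and `O' d` are independent
`{0,1}`-valued indicators of membership in the pseudo-labeled dataset of size `N > 0`,
then for any `δ ∈ (0,1)`, with probability at least `1 - δ`, simultaneously for all
`R̂` in the finite hypothesis space `H`,
`L_ideal(R̂, R) ≤ L̂_pseudo(R̂, R̂¹) + bias(L̂_pseudo(R̂, R̂¹)) + L_ideal(R̂¹, R̂²)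
  + L_ideal(R̂², R) + (Δ/N)·√((|D|/2)·log(2|H|/δ))`,
where `L_ideal(A, B) = (1/|D|)·∑ d, ℓ(A d, B d)`,
`L̂_pseudo(R̂, R̂¹) = (1/N)·∑ d, O' d · ℓ(R̂ d, R̂¹ d)` and
`bias = L_ideal(R̂, R̂¹) - E[L̂_pseudo(R̂, R̂¹)]`. -/
theorem propensity_independent_generalization_bound {D : Type*} [Fintype D] [Nonempty D]
    {Ω : Type*} [MeasureSpace Ω] [IsProbabilityMeasure (ℙ : Measure Ω)]
    (O' : D → Ω → ℝ)
    (hO01 : ∀ d ω, O' d ω = 0 ∨ O' d ω = 1)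
    (hOmeas : ∀ d, Measurable (O' d))
    (hOindep : iIndepFun O' ℙ)
    (N : ℝ) (hN : 0 < N)
    (Δ : ℝ) (hΔ : 0 < Δ)
    (ℓ : ℝ → ℝ → ℝ)
    (hℓ : ∀ x y, ℓ x y ∈ Set.Icc (0 : ℝ) Δ)
    (htri : ∀ x y z, ℓ x z ≤ ℓ x y + ℓ y z)
    (R Rhat₁ Rhat₂ : D → ℝ)
    (H : Finset (D → ℝ)) (hH : H.Nonempty)
    (δ : ℝ) (hδ : δ ∈ Set.Ioo (0 : ℝ) 1) :
    ENNReal.ofReal (1 - δ) ≤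
      (ℙ : Measure Ω) {ω | ∀ Rhat ∈ H,
        (1 / (Fintype.card D : ℝ)) * ∑ d, ℓ (Rhat d) (R d) ≤
          (1 / N) * ∑ d, O' d ω * ℓ (Rhat d) (Rhat₁ d)
          + ((1 / (Fintype.card D : ℝ)) * ∑ d, ℓ (Rhat d) (Rhat₁ d) -
              ∫ ω', (1 / N) * ∑ d, O' d ω' * ℓ (Rhat d) (Rhat₁ d) ∂(ℙ : Measure Ω))
          + (1 / (Fintype.card D : ℝ)) * ∑ d, ℓ (Rhat₁ d) (Rhat₂ d)
          + (1 / (Fintype.card D : ℝ)) * ∑ d, ℓ (Rhat₂ d) (R d)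
          + (Δ / N) * Real.sqrt (((Fintype.card D : ℝ) / 2) *
              Real.log (2 * (H.card : ℝ) / δ))} := by
  obtain ⟨hδ0, hδ1⟩ := hδ
  have hn : 0 < (Fintype.card D : ℝ) := by positivity
  set n : ℝ := (Fintype.card D : ℝ) with hndef
  have hHcard : (1 : ℝ) ≤ (H.card : ℝ) := by
    exact_mod_cast Finset.card_pos.2 hH
  have hL : 0 < Real.log (2 * (H.card : ℝ) / δ) := by
    apply Real.log_pos
    rw [lt_div_iff₀ hδ0]
    linarith
  set L : ℝ := Real.log (2 * (H.card : ℝ) / δ) with hLdef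
  set a : ℝ := Δ * Real.sqrt ((n / 2) * L) with hadef
  have hsq : 0 < (n / 2) * L := by positivity
  have ha : 0 < a := by
    apply mul_pos hΔ
    exact Real.sqrt_pos.2 hsq
  have haeps : (Δ / N) * Real.sqrt ((n / 2) * L) = a / N := by
    rw [hadef]; ring
  -- integrability of O'
  have hOnonneg : ∀ d ω, 0 ≤ O' d ω := by
    intro d ω; rcases hO01 d ω with h | h <;> simp [h]
  have hOle1 : ∀ d ω, O' d ω ≤ 1 := by
    intro d ω; rcases hO01 d ω with h | h <;> simp [h]
  have hOint : ∀ d, Integrable (O' d) (ℙ : Measure Ω) := by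
    intro d
    refine Integrable.mono' (integrable_const 1) (hOmeas d).aestronglyMeasurable ?_
    filter_upwards with ω
    rw [Real.norm_eq_abs, abs_of_nonneg (hOnonneg d ω)]; exact hOle1 d ω
  -- the bad sets
  set c : (D → ℝ) → D → ℝ := fun Rhat d => ℓ (Rhat d) (Rhat₁ d) with hcdef
  set B : (D → ℝ) → Set Ω := fun Rhat =>
    {ω | a ≤ ∑ d, ((∫ ω', O' d ω' ∂(ℙ : Measure Ω)) * c Rhat d - O' d ω * c Rhat d)}
    with hBdef
  have hBmeas : ∀ Rhat, MeasurableSet (B Rhat) := by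
    intro Rhat
    apply measurableSet_le measurable_const
    apply Finset.measurable_sum
    intro d _
    exact measurable_const.sub ((hOmeas d).mul_const _)
  have hBbound : ∀ Rhat, (ℙ : Measure Ω) (B Rhat) ≤ ENNReal.ofReal (δ / (2 * H.card)) := by
    intro Rhat
    refine le_trans (hoeff_tail O' hO01 hOmeas hOindep Δ hΔ (c Rhat)
      (fun d => hℓ _ _) a ha) ?_
    apply ENNReal.ofReal_le_ofReal
    have h1 : -2 * a ^ 2 / (n * Δ ^ 2) = -L := by
      rw [hadef, mul_pow, Real.sq_sqrt hsq.le]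
      field_simp
    rw [show ((Fintype.card D : ℝ) * Δ ^ 2) = n * Δ ^ 2 from rfl, h1, Real.exp_neg, hLdef,
      Real.exp_log (by positivity)]
    rw [inv_div]
  -- union bound
  have hunion : (ℙ : Measure Ω) (⋃ Rhat ∈ H, B Rhat) ≤ ENNReal.ofReal δ := by
    refine le_trans (measure_biUnion_finset_le H B) ?_
    calc ∑ Rhat ∈ H, (ℙ : Measure Ω) (B Rhat)
        ≤ ∑ _x ∈ H, ENNReal.ofReal (δ / (2 * H.card)) :=
          Finset.sum_le_sum fun Rhat _ => hBbound Rhat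
      _ = (H.card : ENNReal) * ENNReal.ofReal (δ / (2 * H.card)) := by
          rw [Finset.sum_const, nsmul_eq_mul]
      _ = ENNReal.ofReal ((H.card : ℝ) * (δ / (2 * H.card))) := by
          rw [ENNReal.ofReal_mul (by positivity), ENNReal.ofReal_natCast]
      _ ≤ ENNReal.ofReal δ := by
          apply ENNReal.ofReal_le_ofReal
          have h2 : (0:ℝ) < 2 * (H.card : ℝ) := by linarith
          rw [mul_div_assoc', div_le_iff₀ h2]
          nlinarith
  -- complement of the union is inside the good set
  set G : Set Ω := {ω | ∀ Rhat ∈ H,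
        (1 / n) * ∑ d, ℓ (Rhat d) (R d) ≤
          (1 / N) * ∑ d, O' d ω * ℓ (Rhat d) (Rhat₁ d)
          + ((1 / n) * ∑ d, ℓ (Rhat d) (Rhat₁ d) -
              ∫ ω', (1 / N) * ∑ d, O' d ω' * ℓ (Rhat d) (Rhat₁ d) ∂(ℙ : Measure Ω))
          + (1 / n) * ∑ d, ℓ (Rhat₁ d) (Rhat₂ d)
          + (1 / n) * ∑ d, ℓ (Rhat₂ d) (R d)
          + (Δ / N) * Real.sqrt ((n / 2) * L)} with hGdef
  have hint_eq : ∀ Rhat : D → ℝ,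
      (∫ ω', (1 / N) * ∑ d, O' d ω' * ℓ (Rhat d) (Rhat₁ d) ∂(ℙ : Measure Ω))
      = (1 / N) * ∑ d, (∫ ω', O' d ω' ∂(ℙ : Measure Ω)) * ℓ (Rhat d) (Rhat₁ d) := by
    intro Rhat
    rw [integral_const_mul]
    congr 1
    rw [integral_finset_sum _ (fun d _ => (hOint d).mul_const _)]
    congr 1
    ext d
    rw [integral_mul_const]
  have hsubset : (⋃ Rhat ∈ H, B Rhat)ᶜ ⊆ G := by
    intro ω hω
    simp only [Set.mem_compl_iff, Set.mem_iUnion, not_exists, exists_prop] at hω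
    intro Rhat hRhat
    have hnotbad : ¬ (a ≤ ∑ d, ((∫ ω', O' d ω' ∂(ℙ : Measure Ω)) * c Rhat d
        - O' d ω * c Rhat d)) := by
      intro hcon
      exact hω Rhat ⟨hRhat, hcon⟩
    push_neg at hnotbad
    -- triangle inequality part
    have htri3 : ∀ d, ℓ (Rhat d) (R d) ≤ ℓ (Rhat d) (Rhat₁ d) + ℓ (Rhat₁ d) (Rhat₂ d)
        + ℓ (Rhat₂ d) (R d) := by
      intro d
      calc ℓ (Rhat d) (R d) ≤ ℓ (Rhat d) (Rhat₂ d) + ℓ (Rhat₂ d) (R d) := htri _ _ _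
        _ ≤ ℓ (Rhat d) (Rhat₁ d) + ℓ (Rhat₁ d) (Rhat₂ d) + ℓ (Rhat₂ d) (R d) := by
            have := htri (Rhat d) (Rhat₁ d) (Rhat₂ d)
            linarith
    have hsum3 : ∑ d, ℓ (Rhat d) (R d) ≤ ∑ d, ℓ (Rhat d) (Rhat₁ d)
        + ∑ d, ℓ (Rhat₁ d) (Rhat₂ d) + ∑ d, ℓ (Rhat₂ d) (R d) := by
      rw [← Finset.sum_add_distrib, ← Finset.sum_add_distrib]
      exact Finset.sum_le_sum fun d _ => htri3 d
    rw [hint_eq Rhat, haeps]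
    have hsumlt : (1 / N) * ∑ d, (∫ ω', O' d ω' ∂(ℙ : Measure Ω)) * ℓ (Rhat d) (Rhat₁ d)
        - (1 / N) * ∑ d, O' d ω * ℓ (Rhat d) (Rhat₁ d) ≤ a / N := by
      rw [← mul_sub, ← Finset.sum_sub_distrib]
      rw [div_eq_mul_inv a N, mul_comm a N⁻¹, ← one_div]
      apply mul_le_mul_of_nonneg_left _ (by positivity)
      exact hnotbad.le
    have h1n : (0:ℝ) < 1 / n := by positivity
    have hmul := mul_le_mul_of_nonneg_left hsum3 h1n.le
    rw [mul_add, mul_add] at hmul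
    linarith
  -- conclude
  have hGmeas_sub : (ℙ : Measure Ω) ((⋃ Rhat ∈ H, B Rhat)ᶜ) ≤ (ℙ : Measure Ω) G :=
    measure_mono hsubset
  have hUmeas : MeasurableSet (⋃ Rhat ∈ H, B Rhat) :=
    MeasurableSet.biUnion H.countable_toSet (fun Rhat _ => hBmeas Rhat)
  rw [prob_compl_eq_one_sub hUmeas] at hGmeas_sub
  refine le_trans ?_ hGmeas_sub
  refine ENNReal.le_sub_of_add_le_right (measure_ne_top _ _) ?_
  calc ENNReal.ofReal (1 - δ) + (ℙ : Measure Ω) (⋃ Rhat ∈ H, B Rhat)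
      ≤ ENNReal.ofReal (1 - δ) + ENNReal.ofReal δ := by
        gcongr
    _ = ENNReal.ofReal 1 := by
        rw [← ENNReal.ofReal_add (by linarith) hδ0.le]
        norm_num
    _ = 1 := ENNReal.ofReal_one
end
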